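/- arXiv:1405.1220 — 7 statements merged into one kernel-verified Lean document; each statement's English description precedes it below -/
import Mathlib

section
/- For any list of natural-number codeword lengths there exists a prefix-free binary code with those lengths if and only if the lengths satisfy Kraft's inequality ∑_i 2^{-ℓ_i} ≤ 1. -/
namespace KraftAux

def val (w : List Bool) : ℕ := w.foldl (fun a b => 2 * a + b.toNat) 0

lemma foldl_eq (a : ℕ) (w : List Bool) :
    w.foldl (fun a b => 2 * a + b.toNat) a = a * 2 ^ w.length + val w := by
  induction w generalizing a with
  | nil => simp [val]
  | cons b t ih =>
      simp only [List.foldl_cons, List.length_cons, val]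
      rw [ih, ih (2 * 0 + b.toNat)]
      ring

lemma val_cons (b : Bool) (t : List Bool) :
    val (b :: t) = b.toNat * 2 ^ t.length + val t := by
  show List.foldl _ _ _ = _
  rw [List.foldl_cons, foldl_eq]
  ring

lemma val_lt (w : List Bool) : val w < 2 ^ w.length := by
  induction w with
  | nil => simp [val]
  | cons b t ih =>
      rw [val_cons, List.length_cons, pow_succ]
      have : b.toNat ≤ 1 := Bool.toNat_le b
      nlinarith

lemma val_append (w u : List Bool) :
    val (w ++ u) = val w * 2 ^ u.length + val u := by
  show List.foldl _ _ _ = _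
  rw [List.foldl_append, foldl_eq]
  rfl

lemma val_inj {w u : List Bool} (hl : w.length = u.length) (hv : val w = val u) :
    w = u := by
  induction w generalizing u with
  | nil => cases u with
    | nil => rfl
    | cons b t => simp at hl
  | cons b t ih =>
      cases u with
      | nil => simp at hl
      | cons b' t' =>
          simp only [List.length_cons, Nat.succ_inj] at hl
          rw [val_cons, val_cons, hl] at hv
          have h1 := val_lt t
          have h2 := val_lt t'
          rw [hl] at h1
          have hb : b = b' := by
            rcases b <;> rcases b' <;> simp_all <;> omega
          have hvv : val t = val t' := by rw [hb] at hv; omega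
          rw [ih hl hvv, hb]

end KraftAux

namespace KraftAux

def enc : ℕ → ℕ → List Bool
  | 0, _ => []
  | (l + 1), v => (decide (2 ^ l ≤ v)) :: enc l (v % 2 ^ l)

@[simp] lemma enc_length (l v : ℕ) : (enc l v).length = l := by
  induction l generalizing v with
  | zero => rfl
  | succ l ih => simp [enc, ih]

lemma val_enc (l v : ℕ) (h : v < 2 ^ l) : val (enc l v) = v := by
  induction l generalizing v with
  | zero => simp at h; simp [h, enc, val]
  | succ l ih =>
      rw [enc, val_cons, enc_length, ih _ (Nat.mod_lt _ (pow_pos two_pos _))]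
      rcases Nat.lt_or_ge v (2 ^ l) with hv | hv
      · simp [Nat.not_le.mpr hv, Nat.mod_eq_of_lt hv]
      · have hd : decide (2 ^ l ≤ v) = true := decide_eq_true hv
        rw [hd]
        have : v % 2 ^ l = v - 2 ^ l := Nat.mod_eq_sub_mod hv ▸ by
          rw [Nat.mod_eq_of_lt]; rw [pow_succ] at h; omega
        simp only [Bool.toNat_true, this]
        omega

lemma exists_code_mono (n : ℕ) (ℓ : Fin n → ℕ) (mono : Monotone ℓ)
    (h : ∑ i, ((2 : ℝ) ^ (ℓ i))⁻¹ ≤ 1) :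
    ∃ c : Fin n → List Bool,
      (∀ i, (c i).length = ℓ i) ∧ (∀ i j, i ≠ j → ¬ (c i <+: c j)) := by
  set m : Fin n → ℕ := fun i => ∑ j ∈ Finset.Iio i, 2 ^ (ℓ i - ℓ j) with hm
  -- bound B : m i + 1 ≤ 2 ^ ℓ i
  have hB : ∀ i, m i + 1 ≤ 2 ^ ℓ i := by
    intro i
    have key : ((m i + 1 : ℕ) : ℝ) ≤ ((2 ^ ℓ i : ℕ) : ℝ) := by
      push_cast
      have e1 : (m i : ℝ) + 1 = 2 ^ ℓ i * ∑ j ∈ Finset.Iic i, ((2 : ℝ) ^ (ℓ j))⁻¹ := by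
        rw [Finset.mul_sum,
          show Finset.Iic i = insert i (Finset.Iio i) from (Finset.Iio_insert i).symm,
          Finset.sum_insert (by simp)]
        have hterm : ∀ j ∈ Finset.Iio i, (2 : ℝ) ^ ℓ i * ((2 : ℝ) ^ ℓ j)⁻¹
            = ((2 ^ (ℓ i - ℓ j) : ℕ) : ℝ) := by
          intro j hj
          have hji : ℓ j ≤ ℓ i := mono (Finset.mem_Iio.mp hj).le
          rw [← pow_sub₀ (2 : ℝ) two_ne_zero hji]
          push_cast; ring
        rw [Finset.sum_congr rfl hterm, ← Nat.cast_sum]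
        have h11 : (2 : ℝ) ^ ℓ i * ((2 : ℝ) ^ ℓ i)⁻¹ = 1 := by field_simp
        rw [h11]
        simp only [hm]
        ring
      rw [e1]
      have e2 : ∑ j ∈ Finset.Iic i, ((2 : ℝ) ^ (ℓ j))⁻¹ ≤ 1 := by
        refine le_trans (Finset.sum_le_sum_of_subset_of_nonneg (Finset.subset_univ _) ?_) h
        intro j _ _
        positivity
      calc (2 : ℝ) ^ ℓ i * ∑ j ∈ Finset.Iic i, ((2 : ℝ) ^ (ℓ j))⁻¹
          ≤ 2 ^ ℓ i * 1 := by
            apply mul_le_mul_of_nonneg_left e2; positivity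
        _ = 2 ^ ℓ i := by ring
    exact_mod_cast key
  -- bound A : j < i → 2 ^ (ℓ i - ℓ j) * (m j + 1) ≤ m i
  have hA : ∀ i j : Fin n, j < i → 2 ^ (ℓ i - ℓ j) * (m j + 1) ≤ m i := by
    intro i j hji
    have hsub : Finset.Iic j ⊆ Finset.Iio i := fun k hk =>
      Finset.mem_Iio.mpr (lt_of_le_of_lt (Finset.mem_Iic.mp hk) hji)
    have h1 : ∑ k ∈ Finset.Iic j, 2 ^ (ℓ i - ℓ k) ≤ m i :=
      Finset.sum_le_sum_of_subset hsub
    have h2 : ∑ k ∈ Finset.Iic j, 2 ^ (ℓ i - ℓ k) = 2 ^ (ℓ i - ℓ j) * (m j + 1) := by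
      rw [show Finset.Iic j = insert j (Finset.Iio j) by rw [Finset.Iio_insert]]
      rw [Finset.sum_insert (by simp), hm]
      simp only [Finset.mul_sum, mul_add, mul_one]
      rw [add_comm]
      congr 1
      refine Finset.sum_congr rfl fun k hk => ?_
      have hkj : ℓ k ≤ ℓ j := mono (Finset.mem_Iio.mp hk).le
      have hjile : ℓ j ≤ ℓ i := mono hji.le
      rw [← pow_add]
      congr 1
      omega
    omega
  refine ⟨fun i => enc (ℓ i) (m i), fun i => enc_length _ _, ?_⟩
  intro i j hij hpre
  obtain ⟨u, hu'⟩ := hpre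
  have hu : enc (ℓ i) (m i) ++ u = enc (ℓ j) (m j) := hu'
  have hlen : ℓ i + u.length = ℓ j := by
    have := congrArg List.length hu
    simpa using this
  have hvj : val (enc (ℓ j) (m j)) = m j := val_enc _ _ (by have := hB j; omega)
  have hvi : val (enc (ℓ i) (m i)) = m i := val_enc _ _ (by have := hB i; omega)
  have hval : m j = m i * 2 ^ u.length + val u := by
    rw [← hvj, ← hu, val_append, hvi]
  have hulb := val_lt u
  rcases lt_trichotomy i j with hlt | heq | hgt
  · have := hA j i hlt
    rw [show ℓ j - ℓ i = u.length by omega] at this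
    nlinarith
  · exact hij heq
  · have hle : ℓ j ≤ ℓ i := mono hgt.le
    have hu0 : u.length = 0 := by omega
    have hAij := hA i j hgt
    have hij0 : ℓ i - ℓ j = 0 := by omega
    rw [hij0, pow_zero, one_mul] at hAij
    rw [hu0, pow_zero] at hulb hval
    omega

end KraftAux

namespace KraftAux

lemma prefix_of_overlap {w u : List Bool} (hlen : w.length ≤ u.length) {N x : ℕ}
    (hN : u.length ≤ N)
    (hw1 : val w * 2 ^ (N - w.length) ≤ x) (hw2 : x < (val w + 1) * 2 ^ (N - w.length))
    (hu1 : val u * 2 ^ (N - u.length) ≤ x) (hu2 : x < (val u + 1) * 2 ^ (N - u.length)) :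
    w <+: u := by
  have hxw : x / 2 ^ (N - w.length) = val w := Nat.div_eq_of_lt_le hw1 hw2
  have hxu : x / 2 ^ (N - u.length) = val u := Nat.div_eq_of_lt_le hu1 hu2
  have hsplit : 2 ^ (N - w.length) = 2 ^ (N - u.length) * 2 ^ (u.length - w.length) := by
    rw [← pow_add]; congr 1; omega
  have hdiv : val w = val u / 2 ^ (u.length - w.length) := by
    rw [← hxw, ← hxu, hsplit, ← Nat.div_div_eq_div_mul]
  have htp : u.take w.length ++ u.drop w.length = u := List.take_append_drop _ _
  have hlp : (u.take w.length).length = w.length := by simp [hlen]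
  have hld : (u.drop w.length).length = u.length - w.length := by simp
  have hvalu : val u = val (u.take w.length) * 2 ^ (u.length - w.length)
      + val (u.drop w.length) := by
    conv_lhs => rw [← htp]
    rw [val_append, hld]
  have hvd := val_lt (u.drop w.length)
  rw [hld] at hvd
  have hvtake : val u / 2 ^ (u.length - w.length) = val (u.take w.length) := by
    rw [hvalu, mul_comm, Nat.mul_add_div (pow_pos two_pos _),
      Nat.div_eq_of_lt hvd, add_zero]
  have : w = u.take w.length := val_inj hlp.symm (by rw [hdiv, hvtake])
  rw [this]
  exact List.take_prefix _ _

lemma kraft_of_code (n : ℕ) (c : Fin n → List Bool)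
    (hpf : ∀ i j, i ≠ j → ¬ (c i <+: c j)) :
    ∑ i, ((2 : ℝ) ^ ((c i).length))⁻¹ ≤ 1 := by
  rcases Nat.eq_zero_or_pos n with rfl | hn
  · simp
  set ℓ : Fin n → ℕ := fun i => (c i).length with hℓ
  set N := ∑ i, ℓ i with hNdef
  have hN : ∀ i, ℓ i ≤ N := fun i =>
    Finset.single_le_sum (fun _ _ => Nat.zero_le _) (Finset.mem_univ i)
  set I : Fin n → Finset ℕ := fun i =>
    Finset.Ico (val (c i) * 2 ^ (N - ℓ i)) ((val (c i) + 1) * 2 ^ (N - ℓ i)) with hI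
  have hdisj : ∀ i ∈ Finset.univ, ∀ j ∈ Finset.univ, i ≠ j → Disjoint (I i) (I j) := by
    intro i _ j _ hij
    rw [Finset.disjoint_left]
    intro x hxi hxj
    simp only [hI, Finset.mem_Ico] at hxi hxj
    rcases le_total (ℓ i) (ℓ j) with hle | hle
    · exact hpf i j hij (prefix_of_overlap hle (hN j) hxi.1 hxi.2 hxj.1 hxj.2)
    · exact hpf j i hij.symm (prefix_of_overlap hle (hN i) hxj.1 hxj.2 hxi.1 hxi.2)
  have hsub : Finset.univ.biUnion I ⊆ Finset.range (2 ^ N) := by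
    intro x hx
    simp only [Finset.mem_biUnion] at hx
    obtain ⟨i, _, hxi⟩ := hx
    simp only [hI, Finset.mem_Ico] at hxi
    rw [Finset.mem_range]
    calc x < (val (c i) + 1) * 2 ^ (N - ℓ i) := hxi.2
      _ ≤ 2 ^ ℓ i * 2 ^ (N - ℓ i) := Nat.mul_le_mul_right _ (val_lt (c i))
      _ = 2 ^ N := by rw [← pow_add]; congr 1; have := hN i; omega
  have hcard : ∑ i, 2 ^ (N - ℓ i) ≤ 2 ^ N := by
    calc ∑ i, 2 ^ (N - ℓ i) = ∑ i, (I i).card := by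
          refine Finset.sum_congr rfl fun i _ => ?_
          rw [hI]
          rw [Nat.card_Ico, Nat.succ_mul, Nat.add_sub_cancel_left]
      _ = (Finset.univ.biUnion I).card := (Finset.card_biUnion hdisj).symm
      _ ≤ (Finset.range (2 ^ N)).card := Finset.card_le_card hsub
      _ = 2 ^ N := Finset.card_range _
  have hre : ∑ i, ((2 : ℝ) ^ (ℓ i))⁻¹ = (∑ i, ((2 : ℕ) ^ (N - ℓ i) : ℝ)) / 2 ^ N := by
    rw [Finset.sum_div]
    refine Finset.sum_congr rfl fun i _ => ?_
    push_cast
    rw [pow_sub₀ (2 : ℝ) two_ne_zero (hN i)]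
    field_simp
  show ∑ i, ((2 : ℝ) ^ (ℓ i))⁻¹ ≤ 1
  rw [hre, div_le_one (by positivity)]
  exact_mod_cast hcard

end KraftAux

/-- Kraft's theorem: a prefix-free binary code with given codeword lengths
exists iff the lengths satisfy Kraft's inequality `∑ 2^{-ℓᵢ} ≤ 1`. -/
theorem prefix_free_code_iff_kraft (L : List ℕ) :
    (∃ c : Fin L.length → List Bool,
        (∀ i, (c i).length = L.get i) ∧
        (∀ i j, i ≠ j → ¬ (c i <+: c j))) ↔
      (∑ i : Fin L.length, ((2 : ℝ) ^ (L.get i))⁻¹ ≤ 1) := by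
  constructor
  · rintro ⟨c, hlen, hpf⟩
    have h := KraftAux.kraft_of_code L.length c hpf
    simp only [hlen] at h
    exact h
  · intro h
    set n := L.length with hn
    set ℓ : Fin n → ℕ := fun i => L.get i with hℓ
    set σ := Tuple.sort ℓ with hσ
    have mono := Tuple.monotone_sort ℓ
    have hsum : ∑ i, ((2 : ℝ) ^ ((ℓ ∘ σ) i))⁻¹ ≤ 1 := by
      have := Equiv.sum_comp σ (fun i => ((2 : ℝ) ^ (ℓ i))⁻¹)
      simpa [Function.comp] using this.le.trans h
    obtain ⟨c, hclen, hcpf⟩ := KraftAux.exists_code_mono n (ℓ ∘ σ) mono hsum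
    refine ⟨fun i => c (σ.symm i), fun i => ?_, fun i j hij => ?_⟩
    · rw [hclen]; simp [hℓ, List.get_eq_getElem]
    · exact hcpf _ _ (fun e => hij (σ.symm.injective e))
end

section
/- In the canonical Huffman code construction, the set of codes produced is prefix-free: if fst[ℓ'] = 2^{ℓ'-ℓ}·(last[ℓ]+1) whenever ℓ' is the next used length after ℓ, and codes of length ℓ are the consecutive integers fst[ℓ],...,last[ℓ] (interpreted as ℓ-bit strings), then no code is a prefix of another. -/
/-- The `ℓ`-bit binary representation of `c`, most significant bit first. -/
def toBits (ℓ c : ℕ) : List Bool :=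
  (List.range ℓ).map (fun i => c.testBit (ℓ - 1 - i))

lemma toBits_length (ℓ c : ℕ) : (toBits ℓ c).length = ℓ := by
  simp [toBits]

lemma testBit_div_pow (n k i : ℕ) : (n / 2^k).testBit i = n.testBit (k + i) := by
  rw [← Nat.shiftRight_eq_div_pow]; exact Nat.testBit_shiftRight n

lemma toBits_getElem (ℓ c i : ℕ) (h : i < ℓ) :
    (toBits ℓ c)[i]'(by simp [toBits]; omega) = c.testBit (ℓ - 1 - i) := by
  simp [toBits]

lemma toBits_add (a b c : ℕ) : toBits (a + b) c = toBits a (c / 2^b) ++ toBits b c := by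
  apply List.ext_getElem
  · simp [toBits]
  intro i h1 h2
  simp only [toBits, List.getElem_map, List.getElem_range, List.getElem_append,
    List.length_map, List.length_range]
  simp only [toBits, List.length_map, List.length_range] at h1
  split
  · rw [testBit_div_pow]
    congr 1
    omega
  · congr 1
    omega

lemma toBits_inj {ℓ c₁ c₂ : ℕ} (h1 : c₁ < 2^ℓ) (h2 : c₂ < 2^ℓ)
    (h : toBits ℓ c₁ = toBits ℓ c₂) : c₁ = c₂ := by
  apply Nat.eq_of_testBit_eq
  intro j
  rcases lt_or_ge j ℓ with hj | hj
  · have hi : ℓ - 1 - j < ℓ := by omega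
    have h' : (toBits ℓ c₁)[ℓ-1-j]'(by rw [toBits_length]; omega)
        = (toBits ℓ c₂)[ℓ-1-j]'(by rw [toBits_length]; omega) := by
      congr 1
    rw [toBits_getElem _ _ _ hi, toBits_getElem _ _ _ hi] at h'
    have hjj : ℓ - 1 - (ℓ - 1 - j) = j := by omega
    rwa [hjj] at h'
  · rw [Nat.testBit_lt_two_pow (lt_of_lt_of_le h1 (Nat.pow_le_pow_right (by norm_num) hj)),
        Nat.testBit_lt_two_pow (lt_of_lt_of_le h2 (Nat.pow_le_pow_right (by norm_num) hj))]

lemma toBits_prefix {ℓ₁ ℓ₂ c₁ c₂ : ℕ} (hl : ℓ₁ ≤ ℓ₂) (h1 : c₁ < 2^ℓ₁) (h2 : c₂ < 2^ℓ₂)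
    (hp : toBits ℓ₁ c₁ <+: toBits ℓ₂ c₂) : c₁ = c₂ / 2^(ℓ₂-ℓ₁) := by
  obtain ⟨d, rfl⟩ := Nat.exists_eq_add_of_le hl
  rw [toBits_add] at hp
  have hlen : (toBits ℓ₁ c₁).length = (toBits ℓ₁ (c₂ / 2^d)).length := by
    simp [toBits_length]
  have heq : toBits ℓ₁ c₁ = toBits ℓ₁ (c₂ / 2^d) := by
    rw [List.prefix_iff_eq_take] at hp
    rwa [toBits_length, List.take_left' (by rw [toBits_length])] at hp
  have hd : c₂ / 2^d < 2^ℓ₁ := by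
    rw [Nat.div_lt_iff_lt_mul (by positivity)]
    calc c₂ < 2^(ℓ₁+d) := h2
    _ = 2^ℓ₁ * 2^d := by rw [pow_add]
  have hdd : ℓ₁ + d - ℓ₁ = d := by omega
  rw [hdd]
  exact toBits_inj h1 hd heq

section
variable {used : Finset ℕ} {nCodes fst last : ℕ → ℕ}

lemma chain_lemma (hused : ∀ ℓ, ℓ ∈ used ↔ 0 < nCodes ℓ)
    (hlast : ∀ ℓ, last ℓ = fst ℓ + nCodes ℓ - 1)
    (hnext : ∀ ℓ ℓ', ℓ ∈ used → ℓ' ∈ used → ℓ < ℓ' →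
      (∀ m ∈ used, ¬ (ℓ < m ∧ m < ℓ')) →
      fst ℓ' = 2 ^ (ℓ' - ℓ) * (last ℓ + 1)) :
    ∀ ℓ' ℓ, ℓ ∈ used → ℓ' ∈ used → ℓ < ℓ' →
      2^(ℓ'-ℓ) * (last ℓ + 1) ≤ fst ℓ' := by
  intro ℓ'
  induction ℓ' using Nat.strong_induction_on with
  | _ ℓ' ih =>
    intro ℓ hℓ hℓ' hlt
    have hSne : (used.filter (fun m => ℓ ≤ m ∧ m < ℓ')).Nonempty :=
      ⟨ℓ, by simp [Finset.mem_filter, hℓ, hlt]⟩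
    obtain ⟨hmu, hml, hmlt⟩ :
        (used.filter (fun m => ℓ ≤ m ∧ m < ℓ')).max' hSne ∈ used ∧
        ℓ ≤ (used.filter (fun m => ℓ ≤ m ∧ m < ℓ')).max' hSne ∧
        (used.filter (fun m => ℓ ≤ m ∧ m < ℓ')).max' hSne < ℓ' := by
      have := Finset.max'_mem _ hSne
      simp only [Finset.mem_filter] at this
      tauto
    set m := (used.filter (fun m => ℓ ≤ m ∧ m < ℓ')).max' hSne with hm
    have hgap : ∀ k ∈ used, ¬ (m < k ∧ k < ℓ') := by
      rintro k hk ⟨h1, h2⟩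
      have hkS : k ∈ used.filter (fun m => ℓ ≤ m ∧ m < ℓ') := by
        simp [Finset.mem_filter]; exact ⟨hk, by omega, h2⟩
      have := Finset.le_max' _ k hkS
      omega
    have hfst := hnext m ℓ' hmu hℓ' hmlt hgap
    rcases eq_or_lt_of_le hml with heq | hlm
    · rw [hfst, ← heq]
    · have h1 := ih m hmlt ℓ hℓ hmu hlm
      have h2 : fst m ≤ last m + 1 := by
        have := hlast m; have := (hused m).1 hmu; omega
      calc 2^(ℓ'-ℓ)*(last ℓ+1) = 2^(ℓ'-m) * (2^(m-ℓ)*(last ℓ+1)) := by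
            rw [← mul_assoc, ← pow_add]; congr 2; omega
        _ ≤ 2^(ℓ'-m) * fst m := Nat.mul_le_mul_left _ h1
        _ ≤ 2^(ℓ'-m) * (last m + 1) := Nat.mul_le_mul_left _ h2
        _ = fst ℓ' := hfst.symm

lemma partial_sum (hused : ∀ ℓ, ℓ ∈ used ↔ 0 < nCodes ℓ)
    (hlast : ∀ ℓ, last ℓ = fst ℓ + nCodes ℓ - 1)
    (hne : used.Nonempty)
    (hmin : fst (used.min' hne) = 0)
    (hnext : ∀ ℓ ℓ', ℓ ∈ used → ℓ' ∈ used → ℓ < ℓ' →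
      (∀ m ∈ used, ¬ (ℓ < m ∧ m < ℓ')) →
      fst ℓ' = 2 ^ (ℓ' - ℓ) * (last ℓ + 1)) :
    ∀ ℓ, ℓ ∈ used → last ℓ + 1 = ∑ k ∈ used.filter (· ≤ ℓ), nCodes k * 2^(ℓ-k) := by
  intro ℓ
  induction ℓ using Nat.strong_induction_on with
  | _ ℓ ih =>
    intro hℓ
    have hnc := (hused ℓ).1 hℓ
    rcases eq_or_ne ℓ (used.min' hne) with heq | hne'
    · have hfilt : used.filter (· ≤ ℓ) = {ℓ} := by
        ext k
        simp only [Finset.mem_filter, Finset.mem_singleton]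
        constructor
        · rintro ⟨hk, hkle⟩
          have := Finset.min'_le used k hk
          omega
        · rintro rfl; exact ⟨hℓ, le_refl _⟩
      rw [hfilt, Finset.sum_singleton, Nat.sub_self, pow_zero, mul_one, hlast, heq, hmin]
      rw [← heq]
      omega
    · have hminlt : used.min' hne < ℓ :=
        lt_of_le_of_ne (Finset.min'_le used ℓ hℓ) (Ne.symm hne')
      have hTne : (used.filter (· < ℓ)).Nonempty :=
        ⟨used.min' hne, by simp [Finset.mem_filter, Finset.min'_mem, hminlt]⟩
      obtain ⟨hmu, hmlt⟩ : (used.filter (· < ℓ)).max' hTne ∈ used ∧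
          (used.filter (· < ℓ)).max' hTne < ℓ := by
        have := Finset.max'_mem _ hTne
        simpa [Finset.mem_filter] using this
      set m := (used.filter (· < ℓ)).max' hTne with hm
      have hgap : ∀ k ∈ used, ¬ (m < k ∧ k < ℓ) := by
        rintro k hk ⟨h1, h2⟩
        have hkS : k ∈ used.filter (· < ℓ) := by simp [Finset.mem_filter, hk, h2]
        have := Finset.le_max' _ k hkS
        omega
      have hfst := hnext m ℓ hmu hℓ hmlt hgap
      have hih := ih m hmlt hmu
      have hfilt : used.filter (· ≤ ℓ) = insert ℓ (used.filter (· ≤ m)) := by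
        ext k
        simp only [Finset.mem_filter, Finset.mem_insert]
        constructor
        · rintro ⟨hk, hkle⟩
          rcases eq_or_ne k ℓ with rfl | hkne
          · exact Or.inl rfl
          · right
            refine ⟨hk, ?_⟩
            have hkS : k ∈ used.filter (· < ℓ) := by
              simp [Finset.mem_filter, hk]; omega
            exact Finset.le_max' _ k hkS
        · rintro (rfl | ⟨hk, hkle⟩)
          · exact ⟨hℓ, le_refl _⟩
          · exact ⟨hk, by omega⟩
      have hnotmem : ℓ ∉ used.filter (· ≤ m) := by
        simp only [Finset.mem_filter]; push_neg; intro _; omega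
      rw [hfilt, Finset.sum_insert hnotmem, Nat.sub_self, pow_zero, mul_one]
      have hsum : ∑ k ∈ used.filter (· ≤ m), nCodes k * 2^(ℓ-k)
          = 2^(ℓ-m) * ∑ k ∈ used.filter (· ≤ m), nCodes k * 2^(m-k) := by
        rw [Finset.mul_sum]
        apply Finset.sum_congr rfl
        intro k hk
        simp only [Finset.mem_filter] at hk
        rw [← mul_assoc, mul_comm (2^(ℓ-m)) (nCodes k), mul_assoc, ← pow_add]
        congr 2
        omega
      rw [hsum, ← hih, ← hfst, hlast ℓ]
      omega

end

lemma code_bound {used : Finset ℕ} {nCodes fst last : ℕ → ℕ}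
    (hused : ∀ ℓ, ℓ ∈ used ↔ 0 < nCodes ℓ)
    (hlast : ∀ ℓ, last ℓ = fst ℓ + nCodes ℓ - 1)
    (hne : used.Nonempty)
    (hmin : fst (used.min' hne) = 0)
    (hnext : ∀ ℓ ℓ', ℓ ∈ used → ℓ' ∈ used → ℓ < ℓ' →
      (∀ m ∈ used, ¬ (ℓ < m ∧ m < ℓ')) →
      fst ℓ' = 2 ^ (ℓ' - ℓ) * (last ℓ + 1))
    (hkraft : ∑ ℓ ∈ used, (nCodes ℓ : ℝ) * ((2 : ℝ) ^ ℓ)⁻¹ = 1) :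
    ∀ ℓ ∈ used, last ℓ < 2^ℓ := by
  have hLu : used.max' hne ∈ used := used.max'_mem hne
  set L := used.max' hne with hLdef
  have hfiltL : used.filter (· ≤ L) = used := by
    ext k
    simp only [Finset.mem_filter, and_iff_left_iff_imp]
    intro hk
    exact Finset.le_max' _ k hk
  have hL := partial_sum hused hlast hne hmin hnext L hLu
  rw [hfiltL] at hL
  have hreal : ((last L + 1 : ℕ) : ℝ) = ((2^L : ℕ) : ℝ) := by
    rw [hL]
    push_cast
    have : ∀ k ∈ used, ((nCodes k : ℝ) * 2^(L-k)) = 2^L * ((nCodes k : ℝ) * ((2:ℝ)^k)⁻¹) := by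
      intro k hk
      have hkL : k ≤ L := Finset.le_max' _ k hk
      rw [pow_sub₀ (2:ℝ) (by norm_num) hkL]
      field_simp
    rw [Finset.sum_congr rfl this, ← Finset.mul_sum, hkraft, mul_one]
  have hLeq : last L + 1 = 2^L := Nat.cast_inj.mp hreal
  intro ℓ hℓ
  rcases eq_or_ne ℓ L with rfl | hne'
  · omega
  · have hlt : ℓ < L := lt_of_le_of_ne (Finset.le_max' _ ℓ hℓ) hne'
    have hch := chain_lemma hused hlast hnext L ℓ hℓ hLu hlt
    have hfl : fst L ≤ last L := by
      have := hlast L; have := (hused L).1 hLu; omega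
    have hmul : 2^(L-ℓ) * (last ℓ + 1) ≤ 2^(L-ℓ) * 2^ℓ := by
      rw [← pow_add]
      have hpow : L - ℓ + ℓ = L := by omega
      rw [hpow, ← hLeq]
      omega
    have := Nat.le_of_mul_le_mul_left hmul (by positivity)
    omega

/-- Canonical Huffman codes are prefix-free: if codes of each used length `ℓ`
are the consecutive integers `fst ℓ, …, last ℓ` (as `ℓ`-bit strings),
`fst` of the minimum used length is `0`, and for consecutive used lengths
`ℓ < ℓ'` we have `fst ℓ' = 2^(ℓ'-ℓ)·(last ℓ + 1)`, then no code is a prefix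
of another (distinct) code. -/
theorem canonical_huffman_prefix_free
    (used : Finset ℕ) (nCodes fst last : ℕ → ℕ)
    (hused : ∀ ℓ, ℓ ∈ used ↔ 0 < nCodes ℓ)
    (hlast : ∀ ℓ, last ℓ = fst ℓ + nCodes ℓ - 1)
    (hne : used.Nonempty)
    (hmin : fst (used.min' hne) = 0)
    (hnext : ∀ ℓ ℓ', ℓ ∈ used → ℓ' ∈ used → ℓ < ℓ' →
      (∀ m ∈ used, ¬ (ℓ < m ∧ m < ℓ')) →
      fst ℓ' = 2 ^ (ℓ' - ℓ) * (last ℓ + 1))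
    (hkraft : ∑ ℓ ∈ used, (nCodes ℓ : ℝ) * ((2 : ℝ) ^ ℓ)⁻¹ = 1) :
    ∀ ℓ₁ ℓ₂ c₁ c₂, ℓ₁ ∈ used → ℓ₂ ∈ used →
      fst ℓ₁ ≤ c₁ → c₁ ≤ last ℓ₁ → fst ℓ₂ ≤ c₂ → c₂ ≤ last ℓ₂ →
      toBits ℓ₁ c₁ <+: toBits ℓ₂ c₂ → ℓ₁ = ℓ₂ ∧ c₁ = c₂ := by
  intro ℓ₁ ℓ₂ c₁ c₂ h1 h2 hf1 hl1 hf2 hl2 hp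
  have hb := code_bound hused hlast hne hmin hnext hkraft
  have hc1 : c₁ < 2^ℓ₁ := lt_of_le_of_lt hl1 (hb ℓ₁ h1)
  have hc2 : c₂ < 2^ℓ₂ := lt_of_le_of_lt hl2 (hb ℓ₂ h2)
  have hlen : ℓ₁ ≤ ℓ₂ := by
    have := hp.length_le
    rwa [toBits_length, toBits_length] at this
  rcases eq_or_lt_of_le hlen with rfl | hlt
  · refine ⟨rfl, ?_⟩
    have heq : toBits ℓ₁ c₁ = toBits ℓ₁ c₂ :=
      hp.eq_of_length (by rw [toBits_length, toBits_length])
    exact toBits_inj hc1 hc2 heq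
  · exfalso
    have hdiv := toBits_prefix hlen hc1 hc2 hp
    have hch := chain_lemma hused hlast hnext ℓ₂ ℓ₁ h1 h2 hlt
    have hd : (0:ℕ) < 2^(ℓ₂-ℓ₁) := by positivity
    have hlt2 : c₂ < (c₂ / 2^(ℓ₂-ℓ₁) + 1) * 2^(ℓ₂-ℓ₁) :=
      (Nat.div_lt_iff_lt_mul hd).mp (Nat.lt_succ_self _)
    have : (c₂ / 2^(ℓ₂-ℓ₁) + 1) * 2^(ℓ₂-ℓ₁) ≤ 2^(ℓ₂-ℓ₁) * (last ℓ₁ + 1) := by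
      rw [mul_comm]
      apply Nat.mul_le_mul_left
      omega
    have hc2f : 2^(ℓ₂-ℓ₁) * (last ℓ₁ + 1) ≤ c₂ := le_trans hch hf2
    omega
end

section
/- The wavelet-matrix level mapping preserves contiguity of node intervals: if all positions of a wavelet-tree node v form a contiguous interval [s,e] in the level-ℓ bitmap B_ℓ, then after mapping each position i with B_ℓ[i]=0 to rank_0(B_ℓ,i) and each position with B_ℓ[i]=1 to z_ℓ + rank_1(B_ℓ,i) (where z_ℓ is the total number of 0s in B_ℓ), the positions of each child of v form a contiguous interval in level ℓ+1. -/
/-- `rankB B b i` = number of positions `p ∈ [1,i]` with `B p = b`. -/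
def rankB (B : ℕ → Bool) (b : Bool) (i : ℕ) : ℕ :=
  ((Finset.Icc 1 i).filter (fun p => B p = b)).card

/-- The wavelet-matrix level mapping: position `i` maps to `rank₀(B,i)` if
`B i = 0`, and to `z + rank₁(B,i)` otherwise, where `z = rank₀(B,n)`. -/
def wmMap (B : ℕ → Bool) (n i : ℕ) : ℕ :=
  if B i = false then rankB B false i else rankB B false n + rankB B true i

lemma rankB_succ (B : ℕ → Bool) (b : Bool) (i : ℕ) :
    rankB B b (i+1) = rankB B b i + if B (i+1) = b then 1 else 0 := by
  unfold rankB
  rw [← Finset.insert_Icc_right_eq_Icc_add_one (by omega : 1 ≤ i+1), Finset.filter_insert]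
  by_cases h : B (i+1) = b
  · rw [if_pos h, if_pos h, Finset.card_insert_of_notMem (by simp)]
  · rw [if_neg h, if_neg h, Nat.add_zero]

lemma rankB_mono (B : ℕ → Bool) (b : Bool) {i j : ℕ} (h : i ≤ j) :
    rankB B b i ≤ rankB B b j := by
  apply Finset.card_le_card
  exact Finset.filter_subset_filter _ (Finset.Icc_subset_Icc_right h)

lemma rankB_exists (B : ℕ → Bool) (b : Bool) (s : ℕ) (hs : 1 ≤ s) :
    ∀ e k, rankB B b (s-1) < k → k ≤ rankB B b e →
      ∃ i, s ≤ i ∧ i ≤ e ∧ B i = b ∧ rankB B b i = k := by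
  intro e
  induction e with
  | zero =>
    intro k h1 h2
    simp [rankB] at h2; omega
  | succ e ih =>
    intro k h1 h2
    by_cases h : k ≤ rankB B b e
    · obtain ⟨i, hi1, hi2, hi3, hi4⟩ := ih k h1 h
      exact ⟨i, hi1, by omega, hi3, hi4⟩
    · have hr := rankB_succ B b e
      have hb : B (e+1) = b := by
        by_contra hb
        simp [hb] at hr; omega
      simp [hb] at hr
      have hse : s ≤ e + 1 := by
        by_contra hse
        have h3 : rankB B b (e+1) ≤ rankB B b (s-1) := rankB_mono B b (by omega)
        omega
      exact ⟨e+1, hse, le_refl _, hb, by omega⟩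

/-- The wavelet-matrix level mapping preserves contiguity: the positions of a
node form an interval `[s,e]`; after mapping, the positions of each child
(those `i ∈ [s,e]` whose bit `B i` equals `b`) form a contiguous interval. -/
theorem wmMap_preserves_contiguity
    (n : ℕ) (B : ℕ → Bool) (s e : ℕ) (hs : 1 ≤ s) (he : e ≤ n) (b : Bool) :
    ∃ s' e', ((Finset.Icc s e).filter (fun i => B i = b)).image (wmMap B n)
      = Finset.Icc s' e' := by
  set c : ℕ := if b then rankB B false n else 0 with hc
  have key : ((Finset.Icc s e).filter (fun i => B i = b)).image (fun i => rankB B b i)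
      = Finset.Icc (rankB B b (s-1) + 1) (rankB B b e) := by
    ext k
    simp only [Finset.mem_image, Finset.mem_filter, Finset.mem_Icc]
    constructor
    · rintro ⟨i, ⟨⟨hsi, hie⟩, hbi⟩, rfl⟩
      have h1 : i - 1 + 1 = i := by omega
      have h2 := rankB_succ B b (i-1)
      rw [h1] at h2
      simp [hbi] at h2
      have h3 : rankB B b (s-1) ≤ rankB B b (i-1) := rankB_mono B b (by omega)
      exact ⟨by omega, rankB_mono B b hie⟩
    · rintro ⟨h1, h2⟩
      obtain ⟨i, hi1, hi2, hi3, hi4⟩ := rankB_exists B b s hs e k (by omega) h2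
      exact ⟨i, ⟨⟨hi1, hi2⟩, hi3⟩, hi4⟩
  have hcongr : ((Finset.Icc s e).filter (fun i => B i = b)).image (wmMap B n)
      = ((Finset.Icc s e).filter (fun i => B i = b)).image (fun i => c + rankB B b i) := by
    apply Finset.image_congr
    intro i hi
    simp only [Finset.mem_coe, Finset.mem_filter] at hi
    cases b with
    | false => simp [wmMap, hi.2, hc]
    | true => simp [wmMap, hi.2, hc]
  refine ⟨c + (rankB B b (s-1) + 1), c + rankB B b e, ?_⟩
  rw [hcongr]
  have : ((Finset.Icc s e).filter (fun i => B i = b)).image (fun i => c + rankB B b i)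
      = (((Finset.Icc s e).filter (fun i => B i = b)).image (fun i => rankB B b i)).image
        (fun x => c + x) := by
    rw [Finset.image_image]; rfl
  rw [this, key]
  ext x
  simp only [Finset.mem_image, Finset.mem_Icc]
  constructor
  · rintro ⟨y, ⟨hy1, hy2⟩, rfl⟩; omega
  · rintro ⟨h1, h2⟩; exact ⟨x - c, ⟨by omega, by omega⟩, by omega⟩
end

section
/- In a wavelet matrix, given codes c_1 and c_2 (bit sequences) stored at distinct positions, c_1 appears before c_2 in the level-ℓ bitmap if there exists 0 ≤ i < ℓ such that c_1[ℓ-i..ℓ-1] = c_2[ℓ-i..ℓ-1] and c_1[ℓ-i-1] = 0 ≠ c_2[ℓ-i-1]; symmetrically c_1 appears after c_2 if c_1[ℓ-i-1] = 1 ≠ c_2[ℓ-i-1]. -/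
/-- Abstract wavelet-matrix order: `wmBefore c1 c2 p1 p2 ℓ` says the element
with code `c1` (bits indexed from 0) and initial position `p1` appears before
the element with code `c2` and initial position `p2` in the level-`ℓ` bitmap.
At level 0 the order is the input order; the stable mapping to level `ℓ+1`
places all positions with bit `c ℓ = 0` (in order) before those with
`c ℓ = 1` (in order). -/
def wmBefore (c1 c2 : ℕ → Bool) (p1 p2 : ℕ) : ℕ → Prop
  | 0 => p1 < p2
  | (ℓ + 1) => (c1 ℓ = false ∧ c2 ℓ = true) ∨ (c1 ℓ = c2 ℓ ∧ wmBefore c1 c2 p1 p2 ℓ)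

/-- Lemma on the order of codes in a wavelet matrix: if
`c1[ℓ-i .. ℓ-1] = c2[ℓ-i .. ℓ-1]` and `c1[ℓ-i-1] ≠ c2[ℓ-i-1]` for some
`0 ≤ i < ℓ`, then `c1` appears before `c2` in the level-`ℓ` bitmap when
`c1[ℓ-i-1] = 0`, and after `c2` when `c1[ℓ-i-1] = 1`. -/
theorem wmBefore_of_suffix_eq
    (c1 c2 : ℕ → Bool) (p1 p2 ℓ i : ℕ) (hi : i < ℓ)
    (hsuffix : ∀ j, ℓ - i ≤ j → j ≤ ℓ - 1 → c1 j = c2 j) :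
    (c1 (ℓ - i - 1) = false → c2 (ℓ - i - 1) = true → wmBefore c1 c2 p1 p2 ℓ) ∧
    (c1 (ℓ - i - 1) = true → c2 (ℓ - i - 1) = false → wmBefore c2 c1 p2 p1 ℓ) := by
  have aux : ∀ (c1 c2 : ℕ → Bool) (p1 p2 k ℓ : ℕ), k < ℓ →
      c1 k = false → c2 k = true → (∀ j, k < j → j < ℓ → c1 j = c2 j) →
      wmBefore c1 c2 p1 p2 ℓ := by
    intro c1 c2 p1 p2 k ℓ
    induction ℓ with
    | zero => omega
    | succ m ih =>
      intro hk h0 h1 heq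
      rcases eq_or_lt_of_le (Nat.lt_succ_iff.mp hk) with h | h
      · exact Or.inl ⟨h ▸ h0, h ▸ h1⟩
      · exact Or.inr ⟨heq m h (Nat.lt_succ_self m),
          ih h h0 h1 (fun j hj hj' => heq j hj (hj'.trans (Nat.lt_succ_self m)))⟩
  constructor
  · intro h0 h1
    exact aux c1 c2 p1 p2 (ℓ - i - 1) ℓ (by omega) h0 h1
      (fun j hj hj' => hsuffix j (by omega) (by omega))
  · intro h1 h0
    exact aux c2 c1 p2 p1 (ℓ - i - 1) ℓ (by omega) h0 h1
      (fun j hj hj' => (hsuffix j (by omega) (by omega)).symm)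
end

section
/- Bit-reversed fixed-length codes appear in numeric order in the last level of the wavelet matrix: for any i < j in [0,σ), the code inv(i,⌈lg σ⌉) (the ⌈lg σ⌉-bit representation of i read backwards) occupies positions strictly to the left of the code inv(j,⌈lg σ⌉) in the bitmap at level ⌈lg σ⌉. -/
/-- `natInv c ℓ` is the number whose `ℓ`-bit binary representation is the
reversal of that of `c`. -/
def natInv (c ℓ : ℕ) : ℕ :=
  ∑ t ∈ Finset.range ℓ, if c.testBit (ℓ - 1 - t) then 2 ^ t else 0

/-- The `⌈lg σ⌉`-bit string of value `v`, MSB first, as a bit sequence. -/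
def msbBits (L v : ℕ) : ℕ → Bool := fun t => v.testBit (L - 1 - t)

lemma sum_bits_lt (b : ℕ → Bool) (L : ℕ) :
    (∑ t ∈ Finset.range L, if b t then 2 ^ t else 0) < 2 ^ L := by
  induction L with
  | zero => simp
  | succ L ih =>
    rw [Finset.sum_range_succ]
    have : (if b L then 2 ^ L else 0) ≤ 2 ^ L := by split <;> simp
    calc _ < 2 ^ L + 2 ^ L := by omega
    _ = 2 ^ (L + 1) := by ring

lemma testBit_sum_bits (b : ℕ → Bool) (L s : ℕ) :
    (∑ t ∈ Finset.range L, if b t then 2 ^ t else 0).testBit s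
      = (decide (s < L) && b s) := by
  induction L with
  | zero => simp
  | succ L ih =>
    rw [Finset.sum_range_succ]
    have hlt := sum_bits_lt b L
    by_cases hbL : b L
    · simp only [hbL, if_true]
      rw [Nat.add_comm]
      rcases lt_trichotomy s L with h | h | h
      · rw [Nat.testBit_two_pow_add_gt h, ih]
        simp [h, Nat.lt_succ_of_lt h]
      · subst h
        rw [Nat.testBit_two_pow_add_eq, Nat.testBit_lt_two_pow hlt]
        simp [hbL]
      · have hbig : 2 ^ L + (∑ t ∈ Finset.range L, if b t then 2 ^ t else 0)
            < 2 ^ s := by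
          calc 2 ^ L + (∑ t ∈ Finset.range L, if b t then 2 ^ t else 0)
              < 2 ^ L + 2 ^ L := by omega
          _ = 2 ^ (L + 1) := by ring
          _ ≤ 2 ^ s := Nat.pow_le_pow_right (by norm_num) h
        rw [Nat.testBit_lt_two_pow hbig]
        simp; omega
    · rw [Bool.not_eq_true] at hbL
      rw [if_neg (by simp [hbL]), Nat.add_zero, ih]
      rcases lt_trichotomy s L with h | h | h
      · simp [h, Nat.lt_succ_of_lt h]
      · subst h; simp [hbL]
      · have h1 : ¬ s < L := by omega
        have h2 : ¬ s < L + 1 := by omega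
        simp [h1, h2]

lemma wmBefore_of_lt (L : ℕ) : ∀ (i j p1 p2 : ℕ) (c1 c2 : ℕ → Bool),
    i < j → j < 2 ^ L →
    (∀ t, t < L → c1 t = i.testBit t) →
    (∀ t, t < L → c2 t = j.testBit t) →
    wmBefore c1 c2 p1 p2 L := by
  induction L with
  | zero => intro i j _ _ _ _ hij hj _ _; simp at hj; omega
  | succ L ih =>
    intro i j p1 p2 c1 c2 hij hj h1 h2
    have hi : i < 2 ^ (L + 1) := lt_trans hij hj
    have hE : 0 < 2 ^ L := Nat.pow_pos (by norm_num)
    have hqi : i / 2 ^ L ≤ 1 := by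
      rw [Nat.div_le_iff_le_mul_add_pred hE]
      rw [pow_succ] at hi; omega
    have hqj : j / 2 ^ L ≤ 1 := by
      rw [Nat.div_le_iff_le_mul_add_pred hE]
      rw [pow_succ] at hj; omega
    have hti : i.testBit L = decide (i / 2 ^ L % 2 = 1) := Nat.testBit_eq_decide_div_mod_eq
    have htj : j.testBit L = decide (j / 2 ^ L % 2 = 1) := Nat.testBit_eq_decide_div_mod_eq
    have hdi := Nat.div_add_mod i (2 ^ L)
    have hdj := Nat.div_add_mod j (2 ^ L)
    have hri : i % 2 ^ L < 2 ^ L := Nat.mod_lt _ hE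
    have hrj : j % 2 ^ L < 2 ^ L := Nat.mod_lt _ hE
    have hrec : i % 2 ^ L < j % 2 ^ L →
        wmBefore c1 c2 p1 p2 L := by
      intro hlt
      refine ih (i % 2 ^ L) (j % 2 ^ L) p1 p2 c1 c2 hlt hrj ?_ ?_
      · intro t ht
        rw [Nat.testBit_mod_two_pow]
        simp [ht, h1 t (by omega)]
      · intro t ht
        rw [Nat.testBit_mod_two_pow]
        simp [ht, h2 t (by omega)]
    by_cases hbi : i.testBit L <;> by_cases hbj : j.testBit L
    · -- both true: recurse on remainders
      have hqi1 : i / 2 ^ L = 1 := by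
        rw [hti] at hbi; simp only [decide_eq_true_eq] at hbi
        generalize i / 2 ^ L = q at hqi hbi ⊢; omega
      have hqj1 : j / 2 ^ L = 1 := by
        rw [htj] at hbj; simp only [decide_eq_true_eq] at hbj
        generalize j / 2 ^ L = q at hqj hbj ⊢; omega
      rw [hqi1, Nat.mul_one] at hdi
      rw [hqj1, Nat.mul_one] at hdj
      refine Or.inr ⟨by rw [h1 L (by omega), h2 L (by omega), hbi, hbj], ?_⟩
      exact hrec (by omega)
    · -- i true, j false: contradiction
      rw [Bool.not_eq_true] at hbj
      exfalso
      have hqi1 : i / 2 ^ L = 1 := by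
        rw [hti] at hbi; simp only [decide_eq_true_eq] at hbi
        generalize i / 2 ^ L = q at hqi hbi ⊢; omega
      have hqj0 : j / 2 ^ L = 0 := by
        rw [htj] at hbj; simp only [decide_eq_false_iff_not] at hbj
        generalize j / 2 ^ L = q at hqj hbj ⊢; omega
      rw [hqi1, Nat.mul_one] at hdi
      rw [hqj0, Nat.mul_zero] at hdj
      omega
    · -- i false, j true
      rw [Bool.not_eq_true] at hbi
      exact Or.inl ⟨by rw [h1 L (by omega)]; exact hbi,
                    by rw [h2 L (by omega)]; exact hbj⟩
    · -- both false: recurse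
      rw [Bool.not_eq_true] at hbi hbj
      have hqi0 : i / 2 ^ L = 0 := by
        rw [hti] at hbi; simp only [decide_eq_false_iff_not] at hbi
        generalize i / 2 ^ L = q at hqi hbi ⊢; omega
      have hqj0 : j / 2 ^ L = 0 := by
        rw [htj] at hbj; simp only [decide_eq_false_iff_not] at hbj
        generalize j / 2 ^ L = q at hqj hbj ⊢; omega
      rw [hqi0, Nat.mul_zero] at hdi
      rw [hqj0, Nat.mul_zero] at hdj
      refine Or.inr ⟨by rw [h1 L (by omega), h2 L (by omega), hbi, hbj], ?_⟩
      exact hrec (by omega)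

lemma msbBits_natInv (L v t : ℕ) (ht : t < L) :
    msbBits L (natInv v L) t = v.testBit t := by
  unfold msbBits natInv
  rw [testBit_sum_bits]
  have h1 : L - 1 - t < L := by omega
  have h2 : L - 1 - (L - 1 - t) = t := by omega
  simp [h1, h2]

/-- Bit-reversed fixed-length codes appear in numeric order in the last level
of the wavelet matrix: for `i < j < σ`, the code `inv(i,⌈lg σ⌉)` lies strictly
to the left of the code `inv(j,⌈lg σ⌉)` at level `⌈lg σ⌉`, regardless of the
initial positions. -/
theorem inv_codes_ordered_at_last_level
    (σ i j p1 p2 : ℕ) (hij : i < j) (hj : j < σ) :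
    wmBefore (msbBits (Nat.clog 2 σ) (natInv i (Nat.clog 2 σ)))
             (msbBits (Nat.clog 2 σ) (natInv j (Nat.clog 2 σ)))
             p1 p2 (Nat.clog 2 σ) := by
  set L := Nat.clog 2 σ with hL
  have hσ : σ ≤ 2 ^ L := Nat.le_pow_clog (by norm_num) σ
  exact wmBefore_of_lt L i j p1 p2 _ _ hij (by omega)
    (fun t ht => msbBits_natInv L i t ht)
    (fun t ht => msbBits_natInv L j t ht)
end

section
/- The code-reassignment algorithm for Huffman-shaped wavelet matrices produces a prefix-free code: starting with candidate set C = {0,1} at level 1 and, at each level ℓ, removing the nCodes[ℓ] codes c from C with minimum inv(c,ℓ) and replacing each remaining code c by c:0 and c:1, the set of all removed (assigned) codes is prefix-free. -/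
/-- `invVal c` is the value of the bit string `c` read backwards (first bit
least significant), i.e. `inv(c, |c|)` as a number. -/
def invVal (c : List Bool) : ℕ :=
  c.foldr (fun b acc => (if b then 1 else 0) + 2 * acc) 0

/-- The code-reassignment algorithm for Huffman-shaped wavelet matrices
produces a prefix-free code: starting with candidate set `C 1 = {0,1}`, at
each level `ℓ` the `nCodes ℓ` codes of minimum `inv` value are removed
(assigned, forming `A ℓ`) and every remaining code `c` is replaced by `c:0`
and `c:1`. Then no assigned code is a proper prefix of another. -/
theorem code_reassignment_prefix_free
    (nCodes : ℕ → ℕ) (C A : ℕ → Finset (List Bool))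
    (hC1 : C 1 = {[false], [true]})
    (hsub : ∀ ℓ, A ℓ ⊆ C ℓ)
    (hcard : ∀ ℓ, 1 ≤ ℓ → (A ℓ).card = nCodes ℓ)
    (hlen : ∀ ℓ c, c ∈ C ℓ → c.length = ℓ)
    (hmininv : ∀ ℓ c c', c ∈ A ℓ → c' ∈ C ℓ → c' ∉ A ℓ → invVal c < invVal c')
    (hstep : ∀ ℓ, 1 ≤ ℓ →
      C (ℓ + 1) = ((C ℓ \ A ℓ).image (fun c => c ++ [false])) ∪
                  ((C ℓ \ A ℓ).image (fun c => c ++ [true]))) :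
    ∀ ℓ₁ ℓ₂ c₁ c₂, 1 ≤ ℓ₁ → 1 ≤ ℓ₂ → c₁ ∈ A ℓ₁ → c₂ ∈ A ℓ₂ →
      c₁ <+: c₂ → c₁ = c₂ := by
  -- key lemma: the length-ℓ prefix of any element of C (ℓ+k+1) lies in C ℓ \ A ℓ
  have key : ∀ k ℓ, 1 ≤ ℓ → ∀ c, c ∈ C (ℓ + (k + 1)) → c.take ℓ ∈ C ℓ \ A ℓ := by
    intro k
    induction k with
    | zero =>
      intro ℓ hℓ c hc
      rw [hstep ℓ hℓ] at hc
      rcases Finset.mem_union.1 hc with h | h <;>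
      · obtain ⟨c', hc', rfl⟩ := Finset.mem_image.1 h
        have hl : c'.length = ℓ := hlen ℓ c' (Finset.mem_sdiff.1 hc').1
        rwa [List.take_append, hl, Nat.sub_self, List.take_zero,
          List.append_nil, List.take_of_length_le (le_of_eq hl)]
    | succ k ih =>
      intro ℓ hℓ c hc
      have h1 : 1 ≤ ℓ + (k + 1) := by omega
      have : ℓ + (k + 1 + 1) = (ℓ + (k + 1)) + 1 := by ring
      rw [this, hstep _ h1] at hc
      rcases Finset.mem_union.1 hc with h | h <;>
      · obtain ⟨c', hc', rfl⟩ := Finset.mem_image.1 h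
        have hc'' := ih ℓ hℓ c' (Finset.mem_sdiff.1 hc').1
        have hl : c'.length = ℓ + (k + 1) := hlen _ c' (Finset.mem_sdiff.1 hc').1
        rwa [List.take_append, show ℓ - c'.length = 0 by omega,
          List.take_zero, List.append_nil]
  intro ℓ₁ ℓ₂ c₁ c₂ h1 h2 ha1 ha2 hpre
  have hl1 : c₁.length = ℓ₁ := hlen _ _ (hsub _ ha1)
  have hl2 : c₂.length = ℓ₂ := hlen _ _ (hsub _ ha2)
  have hle : ℓ₁ ≤ ℓ₂ := by
    have := hpre.length_le; omega
  rcases eq_or_lt_of_le hle with heq | hlt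
  · exact List.prefix_iff_eq_take.1 hpre ▸ by
      rw [List.take_of_length_le (by omega)]
  · exfalso
    have : ℓ₂ = ℓ₁ + ((ℓ₂ - ℓ₁ - 1) + 1) := by omega
    have hk := key (ℓ₂ - ℓ₁ - 1) ℓ₁ h1 c₂ (by rw [← this]; exact hsub _ ha2)
    have htake : c₂.take ℓ₁ = c₁ := by
      obtain ⟨t, rfl⟩ := hpre
      rw [List.take_append, hl1, Nat.sub_self, List.take_zero,
        List.append_nil, List.take_of_length_le (le_of_eq hl1)]
    rw [htake] at hk
    exact (Finset.mem_sdiff.1 hk).2 ha1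
end

section
/- The code-reassignment algorithm for Huffman-shaped wavelet matrices performs a total of O(σ) insertions into the candidate set: the total number of codes ever inserted into C during the algorithm is at most 2σ. -/
/-- The code-reassignment algorithm performs `O(σ)` insertions: if the
candidate set starts as `C 1 = {0,1}`, evolves by removing the assigned codes
`A ℓ ⊆ C ℓ` and appending a 0 and a 1 to each remaining code, and is empty
after level `m`, then the total number of codes ever present in `C` is at
most twice the total number `σ` of assigned codes. -/
theorem code_reassignment_total_insertions
    (m : ℕ) (C A : ℕ → Finset (List Bool))
    (hC1 : C 1 = {[false], [true]})
    (hsub : ∀ ℓ, A ℓ ⊆ C ℓ)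
    (hlen : ∀ ℓ c, c ∈ C ℓ → c.length = ℓ)
    (hstep : ∀ ℓ, 1 ≤ ℓ →
      C (ℓ + 1) = ((C ℓ \ A ℓ).image (fun c => c ++ [false])) ∪
                  ((C ℓ \ A ℓ).image (fun c => c ++ [true])))
    (hend : C (m + 1) = ∅) :
    ∑ ℓ ∈ Finset.Icc 1 m, (C ℓ).card ≤ 2 * ∑ ℓ ∈ Finset.Icc 1 m, (A ℓ).card := by
  have hinj : ∀ b : Bool, Function.Injective (fun c : List Bool => c ++ [b]) := by
    intro b x y h
    simpa using congrArg List.dropLast h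
  -- key step: card (C (ℓ+1)) + 2 * card (A ℓ) = 2 * card (C ℓ)
  have key : ∀ ℓ, 1 ≤ ℓ →
      (C (ℓ + 1)).card + 2 * (A ℓ).card = 2 * (C ℓ).card := by
    intro ℓ hℓ
    have hdisj : Disjoint ((C ℓ \ A ℓ).image (fun c => c ++ [false]))
        ((C ℓ \ A ℓ).image (fun c => c ++ [true])) := by
      rw [Finset.disjoint_left]
      intro a ha hb
      simp only [Finset.mem_image] at ha hb
      obtain ⟨x, -, hx⟩ := ha
      obtain ⟨y, -, hy⟩ := hb
      have : (x ++ [false]).getLast? = (y ++ [true]).getLast? := by rw [hx, hy]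
      simp [List.getLast?_append] at this
    have hcard : (C (ℓ + 1)).card = 2 * (C ℓ \ A ℓ).card := by
      rw [hstep ℓ hℓ, Finset.card_union_of_disjoint hdisj,
        Finset.card_image_of_injective _ (hinj false),
        Finset.card_image_of_injective _ (hinj true)]
      ring
    have hsd : (C ℓ \ A ℓ).card + (A ℓ).card = (C ℓ).card :=
      Finset.card_sdiff_add_card_eq_card (hsub ℓ)
    omega
  rcases Nat.eq_zero_or_pos m with rfl | hm
  · simp
  -- invariant by induction
  have main : ∀ n, 1 ≤ n →
      2 * ∑ ℓ ∈ Finset.Icc 1 n, (A ℓ).card + (C (n + 1)).card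
        = ∑ ℓ ∈ Finset.Icc 1 n, (C ℓ).card + 2 := by
    intro n hn
    induction n with
    | zero => omega
    | succ k ih =>
      rcases Nat.eq_zero_or_pos k with rfl | hk
      · have h1 := key 1 le_rfl
        simp only [Finset.Icc_self, Finset.sum_singleton]
        have h2 : (C 1).card = 2 := by rw [hC1]; decide
        norm_num at h1 ⊢
        omega
      · have ih' := ih hk
        rw [Finset.sum_Icc_succ_top (by omega : 1 ≤ k + 1),
          Finset.sum_Icc_succ_top (by omega : 1 ≤ k + 1)]
        have h1 := key (k + 1) (by omega)
        omega
  have := main m hm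
  rw [hend] at this
  simp at this
  omega
end
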